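/- Let R be a commutative unital ring and δ : R → R a derivation. If R is a maximal commutative subring of the differential polynomial ring R[x;id_R,δ], then I ∩ R ≠ {0} holds for every non-zero two-sided ideal I of R[x;id_R,δ]. -/

import Mathlib

/-- `δ` is a `σ`-derivation of `R`: it is additive and satisfies the twisted Leibniz rule
`δ(ab) = σ(a)δ(b) + δ(a)b`. -/
def IsSigmaDerivation {R : Type*} [Ring R] (σ : R →+* R) (δ : R → R) : Prop :=
  (∀ a b : R, δ (a + b) = δ a + δ b) ∧ ∀ a b : R, δ (a * b) = σ a * δ b + δ a * b

/-- `S`, together with the ring morphism `f : R →+* S` and the element `x : S`, is an Ore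
extension `R[x;σ,δ]`: the powers `1, x, x², …` form a basis of `S` as a left `R`-module
(i.e. every element of `S` is, in a unique way, a finite sum `Σᵢ f(aᵢ) xⁱ`), and the
commutation rule `x·r = σ(r)·x + δ(r)` holds for all `r ∈ R`. -/
structure IsOreExtension {R S : Type*} [Ring R] [Ring S]
    (σ : R →+* R) (δ : R → R) (f : R →+* S) (x : S) : Prop where
  basis : Function.Bijective fun a : ℕ →₀ R => a.sum fun i r => f r * x ^ i
  rel : ∀ r : R, x * f r = f (σ r) * x + f (δ r)

/-- `R` is `σ`-`δ`-simple: the only two-sided ideals `J` of `R` with `σ(J) ⊆ J` and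
`δ(J) ⊆ J` are `{0}` and `R`. -/
def IsSigmaDeltaSimple {R : Type*} [Ring R] (σ : R →+* R) (δ : R → R) : Prop :=
  ∀ J : TwoSidedIdeal R, (∀ a ∈ J, σ a ∈ J) → (∀ a ∈ J, δ a ∈ J) → J = ⊥ ∨ J = ⊤

/-- `R` is `δ`-simple: the only two-sided ideals `J` of `R` with `δ(J) ⊆ J` are `{0}`
and `R`. -/
def IsDeltaSimple {R : Type*} [Ring R] (δ : R → R) : Prop :=
  ∀ J : TwoSidedIdeal R, (∀ a ∈ J, δ a ∈ J) → J = ⊥ ∨ J = ⊤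

section Aux

variable {R S : Type*} [CommRing R] [Ring S] (f : R →+* S) (x : S)

/-- `s` can be written as a sum `∑_{i<n} f(gᵢ) xⁱ`. -/
def RepLt (n : ℕ) (s : S) : Prop :=
  ∃ g : ℕ → R, s = ∑ i ∈ Finset.range n, f (g i) * x ^ i

lemma repLt_zero {s : S} (h : RepLt f x 0 s) : s = 0 := by
  obtain ⟨g, rfl⟩ := h
  simp

lemma repLt_zero' (n : ℕ) : RepLt f x n (0 : S) :=
  ⟨fun _ => 0, by simp⟩

lemma repLt_add {n : ℕ} {s t : S} (hs : RepLt f x n s) (ht : RepLt f x n t) :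
    RepLt f x n (s + t) := by
  obtain ⟨g, rfl⟩ := hs
  obtain ⟨g', rfl⟩ := ht
  refine ⟨fun i => g i + g' i, ?_⟩
  rw [← Finset.sum_add_distrib]
  refine Finset.sum_congr rfl fun i _ => ?_
  rw [map_add, add_mul]

lemma repLt_mono {m n : ℕ} (hmn : m ≤ n) {s : S} (hs : RepLt f x m s) : RepLt f x n s := by
  obtain ⟨g, rfl⟩ := hs
  refine ⟨fun i => if i < m then g i else 0, ?_⟩
  rw [← Finset.sum_subset (Finset.range_subset_range.2 hmn)]
  · refine Finset.sum_congr rfl fun i hi => ?_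
    simp [Finset.mem_range.1 hi]
  · intro i _ hi
    simp [Nat.not_lt.1 (by simpa using hi) |>.not_gt]

lemma repLt_mul_left {n : ℕ} {s : S} (c : R) (hs : RepLt f x n s) :
    RepLt f x n (f c * s) := by
  obtain ⟨g, rfl⟩ := hs
  refine ⟨fun i => c * g i, ?_⟩
  rw [Finset.mul_sum]
  refine Finset.sum_congr rfl fun i _ => ?_
  rw [map_mul, mul_assoc]

lemma repLt_single (n : ℕ) (c : R) : RepLt f x (n + 1) (f c * x ^ n) := by
  refine ⟨fun i => if i = n then c else 0, ?_⟩
  rw [Finset.sum_eq_single n]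
  · simp
  · intro i _ hi
    simp [hi]
  · intro h
    exact absurd (Finset.self_mem_range_succ n) h

lemma repLt_sum {n : ℕ} {ι : Type*} (t : Finset ι) (F : ι → S)
    (h : ∀ i ∈ t, RepLt f x n (F i)) : RepLt f x n (∑ i ∈ t, F i) := by
  classical
  induction t using Finset.induction_on with
  | empty => simpa using repLt_zero' f x n
  | insert _ _ hne ih =>
    rw [Finset.sum_insert hne]
    exact repLt_add f x (h _ (Finset.mem_insert_self _ _))
      (ih fun i hi => h i (Finset.mem_insert_of_mem hi))

variable {δ : R → R} (hrel : ∀ r : R, x * f r = f r * x + f (δ r))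

include hrel in
lemma repLt_x_mul {n : ℕ} {s : S} (hs : RepLt f x n s) : RepLt f x (n + 1) (x * s) := by
  obtain ⟨g, rfl⟩ := hs
  rw [Finset.mul_sum]
  have key : ∀ i ∈ Finset.range n,
      x * (f (g i) * x ^ i) = f (g i) * x ^ (i + 1) + f (δ (g i)) * x ^ i := by
    intro i _
    rw [← mul_assoc, hrel, add_mul, mul_assoc, ← pow_succ']
  rw [Finset.sum_congr rfl key, Finset.sum_add_distrib]
  refine repLt_add f x ?_ (repLt_mono f x (Nat.le_succ n) ⟨fun i => δ (g i), rfl⟩)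
  refine ⟨fun j => match j with | 0 => 0 | k + 1 => g k, ?_⟩
  rw [Finset.sum_range_succ']
  simp

include hrel in
lemma pow_comm_repLt (n : ℕ) (r : R) :
    ∃ t : S, RepLt f x n t ∧ x ^ n * f r = f r * x ^ n + t := by
  induction n with
  | zero => exact ⟨0, repLt_zero' f x 0, by simp⟩
  | succ n ih =>
    obtain ⟨t, ht, heq⟩ := ih
    refine ⟨f (δ r) * x ^ n + x * t,
      repLt_add f x (repLt_single f x n (δ r)) (repLt_x_mul f x hrel ht), ?_⟩
    calc x ^ (n + 1) * f r = x * (x ^ n * f r) := by rw [pow_succ', mul_assoc]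
    _ = x * (f r * x ^ n) + x * t := by rw [heq, mul_add]
    _ = (f r * x + f (δ r)) * x ^ n + x * t := by rw [← mul_assoc, hrel]
    _ = f r * x ^ (n + 1) + (f (δ r) * x ^ n + x * t) := by
        rw [add_mul, mul_assoc, ← pow_succ', add_assoc]

include hrel in
lemma repLt_comm {n : ℕ} {s : S} (hs : RepLt f x (n + 1) s) (r : R) :
    RepLt f x n (s * f r - f r * s) := by
  obtain ⟨g, rfl⟩ := hs
  have key : ∀ i ∈ Finset.range (n + 1),
      ∃ t : S, RepLt f x n t ∧
        f (g i) * x ^ i * f r - f r * (f (g i) * x ^ i) = t := by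
    intro i hi
    obtain ⟨t, ht, heq⟩ := pow_comm_repLt f x hrel i r
    refine ⟨f (g i) * t, repLt_mul_left f x _
      (repLt_mono f x (Nat.lt_succ_iff.1 (Finset.mem_range.1 hi)) ht), ?_⟩
    rw [mul_assoc, heq, mul_add, ← mul_assoc, ← mul_assoc, ← map_mul, ← map_mul,
      mul_comm (g i) r]
    exact add_sub_cancel_left _ _
  choose t ht heq using key
  have hsum : (∑ i ∈ Finset.range (n + 1), f (g i) * x ^ i) * f r
      - f r * ∑ i ∈ Finset.range (n + 1), f (g i) * x ^ i
      = ∑ i ∈ (Finset.range (n + 1)).attach, t i.1 i.2 := by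
    rw [Finset.sum_mul, Finset.mul_sum, ← Finset.sum_sub_distrib,
      ← Finset.sum_attach (Finset.range (n + 1))
        (fun i => f (g i) * x ^ i * f r - f r * (f (g i) * x ^ i))]
    exact Finset.sum_congr rfl fun i _ => heq i.1 i.2
  rw [hsum]
  exact repLt_sum f x _ _ fun i _ => ht i.1 i.2

end Aux

/-- If `R` is commutative and a maximal commutative subring of `R[x;id,δ]`, then every
non-zero two-sided ideal of `R[x;id,δ]` intersects `R` non-trivially. -/
theorem stmt_12 {R S : Type*} [CommRing R] [Ring S] (δ : R → R)
    (hδ : IsSigmaDerivation (RingHom.id R) δ) (f : R →+* S) (x : S)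
    (hS : IsOreExtension (RingHom.id R) δ f x)
    (hmax : Subring.centralizer (Set.range f) = f.range)
    (I : TwoSidedIdeal S) (hI : I ≠ ⊥) :
    ∃ s : S, s ∈ I ∧ s ≠ 0 ∧ s ∈ Set.range f := by
  have hrel : ∀ r : R, x * f r = f r * x + f (δ r) := by
    intro r; simpa using hS.rel r
  -- every element of S admits some representation
  have hrep : ∀ s : S, ∃ n, RepLt f x n s := by
    intro s
    obtain ⟨a, rfl⟩ := hS.basis.2 s
    refine ⟨a.support.sup id + 1, a, ?_⟩
    refine Finsupp.sum_of_support_subset a ?_ _ ?_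
    · intro i hi
      exact Finset.mem_range.2 (Nat.lt_succ_of_le (Finset.le_sup (f := id) hi))
    · intro i _
      rw [map_zero, zero_mul]
  -- main induction
  have main : ∀ n : ℕ, ∀ s : S, RepLt f x n s → s ∈ I → s ≠ 0 →
      ∃ s : S, s ∈ I ∧ s ≠ 0 ∧ s ∈ Set.range f := by
    intro n
    induction n with
    | zero => intro s hs _ hne; exact absurd (repLt_zero f x hs) hne
    | succ n ih =>
      intro s hs hsI hne
      by_cases hc : ∀ r : R, s * f r = f r * s
      · have hcen : s ∈ Subring.centralizer (Set.range f) := by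
          rw [Subring.mem_centralizer_iff]
          rintro g ⟨r, rfl⟩
          exact (hc r).symm
        rw [hmax] at hcen
        obtain ⟨r, hr⟩ := hcen
        exact ⟨s, hsI, hne, r, hr⟩
      · push_neg at hc
        obtain ⟨r, hr⟩ := hc
        exact ih (s * f r - f r * s) (repLt_comm f x hrel hs r)
          (I.sub_mem (I.mul_mem_right _ _ hsI) (I.mul_mem_left _ _ hsI))
          (sub_ne_zero.2 hr)
  -- find a nonzero element of I
  have hex : ∃ s : S, s ∈ I ∧ s ≠ 0 := by
    by_contra h
    push_neg at h
    refine hI (le_antisymm (fun s hs => ?_) bot_le)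
    exact (TwoSidedIdeal.mem_bot S).2 (h s hs)
  obtain ⟨s, hsI, hne⟩ := hex
  obtain ⟨n, hn⟩ := hrep s
  exact main n s hn hsI hne
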